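/- Let p ≥ 1 and n ≥ 2 be integers and x, y > 0 real numbers. Let Z be the (p+n)×n matrix whose first p rows have all entries equal to x and whose last n rows have all entries equal to y, and let Q be the (2n+p−1)×(2n+p−1) symmetric matrix associated to Z, written Q = A + E with A diagonal and E off-diagonal. Then E has rank at most 2, every principal minor of E of order 1 or of order ≥ 3 vanishes, and consequently, with S_k as in the diagonal expansion of det(A+E): det E = 0, S_{2n+p−2} = 0, S_{2n+p−i} = 0 for all i ≥ 4, and det Q = det A + S_{2n+p−3}. -/

import Mathlib

/-- The `(m+n−1) × (m+n−1)` symmetric matrix `Q` associated to an `m × n` matrix `Z`. -/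
noncomputable def Qmat {m n : ℕ} (z : Fin m → Fin n → ℝ) :
    Matrix (Fin (m + n - 1)) (Fin (m + n - 1)) ℝ :=
  Matrix.of fun i j =>
    if hi : (i : ℕ) < m then
      if hj : (j : ℕ) < m then
        if i = j then ∑ k : Fin n, (z ⟨i, hi⟩ k + z ⟨i, hi⟩ k ^ 2) else 0
      else
        z ⟨i, hi⟩ ⟨(j : ℕ) - m, by have := j.isLt; omega⟩ ^ 2
          + z ⟨i, hi⟩ ⟨(j : ℕ) - m, by have := j.isLt; omega⟩
    else
      if hj : (j : ℕ) < m then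
        z ⟨j, hj⟩ ⟨(i : ℕ) - m, by have := i.isLt; omega⟩ ^ 2
          + z ⟨j, hj⟩ ⟨(i : ℕ) - m, by have := i.isLt; omega⟩
      else
        if i = j then
          ∑ l : Fin m, (z l ⟨(i : ℕ) - m, by have := i.isLt; omega⟩
            + z l ⟨(i : ℕ) - m, by have := i.isLt; omega⟩ ^ 2)
        else 0

/-- The principal minor of `E` on the index set `T`. -/
noncomputable def principalMinor {N : ℕ} (E : Matrix (Fin N) (Fin N) ℝ)
    (T : Finset (Fin N)) : ℝ :=
  (E.submatrix (T.orderEmbOfFin rfl) (T.orderEmbOfFin rfl)).det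

/-- The term `S_k` of the diagonal expansion of `det(A + E)` with `A = diag(a)`. -/
noncomputable def Sterm {N : ℕ} (a : Fin N → ℝ) (E : Matrix (Fin N) (Fin N) ℝ)
    (k : ℕ) : ℝ :=
  ∑ S ∈ Finset.powersetCard k (Finset.univ : Finset (Fin N)),
    (∏ i ∈ S, a i) * principalMinor E Sᶜ

/-- The `(p+n) × n` matrix whose first `p` rows are constantly `x` and whose last `n`
rows are constantly `y`. -/
def rowZ (p n : ℕ) (x y : ℝ) : Fin (p + n) → Fin n → ℝ :=
  fun i _ => if (i : ℕ) < p then x else y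

/-- Auxiliary: a `k × k` matrix which factors through `Fin 2` has zero determinant
once `3 ≤ k`. -/
lemma aux_det_mul_fin_two {k : ℕ} (hk : 3 ≤ k) (C : Matrix (Fin k) (Fin 2) ℝ)
    (R : Matrix (Fin 2) (Fin k) ℝ) : (C * R).det = 0 := by
  by_contra hdet
  have h1 : IsUnit (C * R) := (Matrix.isUnit_iff_isUnit_det _).2 (isUnit_iff_ne_zero.2 hdet)
  have h2 := Matrix.rank_of_isUnit _ h1
  have h3 : (C * R).rank ≤ 2 :=
    le_trans (Matrix.rank_mul_le_right C R) (by simpa using Matrix.rank_le_card_height R)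
  rw [h2] at h3
  simp [Fintype.card_fin] at h3
  omega

lemma principalMinor_empty {N : ℕ} (E : Matrix (Fin N) (Fin N) ℝ) :
    principalMinor E ∅ = 1 := Matrix.det_fin_zero

lemma det_block_one {α : Type} [Fintype α] [DecidableEq α] (M : Matrix α α ℝ)
    (p : α → Prop) [DecidablePred p]
    (h11 : M.toBlock p p = 1) (h12 : M.toBlock p (fun j => ¬ p j) = 0) :
    M.det = (M.toBlock (fun j => ¬ p j) (fun j => ¬ p j)).det := by
  rw [Matrix.det_toBlock M p, h11, h12, Matrix.det_fromBlocks_zero₁₂, Matrix.det_one, one_mul]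

lemma principalMinor_compl {N : ℕ} (E : Matrix (Fin N) (Fin N) ℝ) (s : Finset (Fin N)) :
    principalMinor E sᶜ = (E.toBlock (fun j => ¬ j ∈ s) (fun j => ¬ j ∈ s)).det := by
  rw [principalMinor, ← Matrix.det_submatrix_equiv_self
    (((sᶜ).orderIsoOfFin rfl).toEquiv.trans
      (Equiv.subtypeEquivRight (fun i => Finset.mem_compl)))
    (E.toBlock _ _)]
  rfl

lemma diag_row_eq {N : ℕ} (a : Fin N → ℝ) (i : Fin N) :
    Matrix.diagonal a i = a i • (Pi.single i (1 : ℝ) : Fin N → ℝ) := by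
  funext j
  by_cases h : i = j
  · subst h; simp
  · simp [Matrix.diagonal_apply_ne _ h, Pi.single_apply, Ne.symm h]

/-- The diagonal expansion of the determinant. -/
lemma det_diagonal_add {N : ℕ} (a : Fin N → ℝ) (E : Matrix (Fin N) (Fin N) ℝ) :
    (Matrix.diagonal a + E).det
      = ∑ s : Finset (Fin N), (∏ i ∈ s, a i) * principalMinor E sᶜ := by
  classical
  have h0 := MultilinearMap.map_add_univ
    (Matrix.detRowAlternating (n := Fin N) (R := ℝ)).toMultilinearMap (Matrix.diagonal a) E
  refine h0.trans (Finset.sum_congr rfl fun s _ => ?_)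
  set m0 : Fin N → (Fin N → ℝ) := fun i => if i ∈ s then Pi.single i 1 else E i with hm0
  have h1 : s.piecewise (Matrix.diagonal a) E = s.piecewise (fun i => a i • m0 i) m0 := by
    funext i
    by_cases hi : i ∈ s
    · simp [Finset.piecewise, hi, m0, diag_row_eq]
    · simp [Finset.piecewise, hi, m0]
  rw [h1, MultilinearMap.map_piecewise_smul, smul_eq_mul]
  congr 1
  show (show Matrix (Fin N) (Fin N) ℝ from m0).det = principalMinor E sᶜ
  set M0 : Matrix (Fin N) (Fin N) ℝ := m0 with hM0
  have h11 : M0.toBlock (fun i => i ∈ s) (fun i => i ∈ s) = 1 := by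
    ext ⟨i, hi⟩ ⟨j, hj⟩
    by_cases h : i = j
    · subst h; rw [Matrix.toBlock_apply]; simp [Matrix.toBlock, M0, m0, hi, Matrix.one_apply]
    · rw [Matrix.toBlock_apply]; simp [Matrix.toBlock, M0, m0, hi, Matrix.one_apply, Pi.single_apply, Ne.symm h,
        Subtype.ext_iff, h]
  have h12 : M0.toBlock (fun i => i ∈ s) (fun j => ¬ j ∈ s) = 0 := by
    ext ⟨i, hi⟩ ⟨j, hj⟩
    have : j ≠ i := fun hji => hj (hji ▸ hi)
    rw [Matrix.toBlock_apply]; simp [Matrix.toBlock, M0, m0, hi, Pi.single_apply, this]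
  have h22 : M0.toBlock (fun j => ¬ j ∈ s) (fun j => ¬ j ∈ s)
      = E.toBlock (fun j => ¬ j ∈ s) (fun j => ¬ j ∈ s) := by
    ext ⟨i, hi⟩ ⟨j, hj⟩
    rw [Matrix.toBlock_apply]; simp [Matrix.toBlock, M0, m0, hi]
  rw [det_block_one M0 (fun i => i ∈ s) h11 h12, h22, principalMinor_compl]

/-- Auxiliary: the final determinant identity, for a general split `Q = A + E` whose
off-diagonal part has vanishing principal minors of orders `1` and `≥ 3`. -/
lemma final_aux {N : ℕ} (hN : 3 ≤ N) (Q E : Matrix (Fin N) (Fin N) ℝ)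
    (hQE : Q = Matrix.diagonal (fun i => Q i i) + E)
    (minor1 : ∀ T : Finset (Fin N), T.card = 1 → principalMinor E T = 0)
    (minor3 : ∀ T : Finset (Fin N), 3 ≤ T.card → principalMinor E T = 0) :
    Q.det = (Matrix.diagonal (fun i => Q i i)).det
      + Sterm (fun i => Q i i) E (N - 2) := by
  classical
  set a : Fin N → ℝ := fun i => Q i i with ha
  have hdet : Q.det = ∑ s : Finset (Fin N), (∏ i ∈ s, a i) * principalMinor E sᶜ := by
    conv_lhs => rw [hQE]
    exact det_diagonal_add a E
  have hsplit : ∀ s : Finset (Fin N),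
      (∏ i ∈ s, a i) * principalMinor E sᶜ
        = (if s.card = N then (∏ i ∈ s, a i) * principalMinor E sᶜ else 0)
          + (if s.card = N - 2 then (∏ i ∈ s, a i) * principalMinor E sᶜ else 0) := by
    intro s
    have hsle : s.card ≤ N := by
      simpa [Finset.card_univ] using Finset.card_le_univ s
    have hc : sᶜ.card = N - s.card := by rw [Finset.card_compl, Fintype.card_fin]
    by_cases h1 : s.card = N
    · have h2 : ¬ s.card = N - 2 := by omega
      rw [if_pos h1, if_neg h2, add_zero]
    · by_cases h2 : s.card = N - 2
      · rw [if_neg h1, if_pos h2, zero_add]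
      · have h0 : principalMinor E sᶜ = 0 := by
          by_cases h3 : sᶜ.card = 1
          · exact minor1 _ h3
          · exact minor3 _ (by omega)
        rw [if_neg h1, if_neg h2, h0, mul_zero, add_zero]
  have hsum_if : ∀ k : ℕ,
      (∑ s : Finset (Fin N), if s.card = k then (∏ i ∈ s, a i) * principalMinor E sᶜ else 0)
        = Sterm a E k := by
    intro k
    rw [Sterm, Finset.powersetCard_eq_filter, Finset.powerset_univ, Finset.sum_filter]
  have hps : Finset.powersetCard N (Finset.univ : Finset (Fin N)) = {Finset.univ} := by
    simpa using Finset.powersetCard_self (Finset.univ : Finset (Fin N))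
  have hSN : Sterm a E N = (Matrix.diagonal a).det := by
    rw [Sterm, hps, Finset.sum_singleton, Finset.compl_univ, principalMinor_empty, mul_one,
      Matrix.det_diagonal]
  calc Q.det = ∑ s : Finset (Fin N), (∏ i ∈ s, a i) * principalMinor E sᶜ := hdet
    _ = ∑ s : Finset (Fin N),
          ((if s.card = N then (∏ i ∈ s, a i) * principalMinor E sᶜ else 0)
            + (if s.card = N - 2 then (∏ i ∈ s, a i) * principalMinor E sᶜ else 0)) :=
        Finset.sum_congr rfl fun s _ => hsplit s
    _ = (∑ s : Finset (Fin N), if s.card = N then (∏ i ∈ s, a i) * principalMinor E sᶜ else 0)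
          + (∑ s : Finset (Fin N),
              if s.card = N - 2 then (∏ i ∈ s, a i) * principalMinor E sᶜ else 0) :=
        Finset.sum_add_distrib
    _ = Sterm a E N + Sterm a E (N - 2) := by rw [hsum_if, hsum_if]
    _ = (Matrix.diagonal a).det + Sterm a E (N - 2) := by rw [hSN]

/-- For the row-constant matrix `Z`, the off-diagonal part `E` of the associated matrix
`Q` has rank at most `2`, all principal minors of `E` of order `1` or of order `≥ 3`
vanish, and consequently `det E = 0`, `S_{2n+p−2} = 0`, `S_{2n+p−i} = 0` for `i ≥ 4`,
and `det Q = det A + S_{2n+p−3}`. -/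
theorem offDiagonal_part_rowConstant (p n : ℕ) (hp : 1 ≤ p) (hn : 2 ≤ n)
    (x y : ℝ) (hx : 0 < x) (hy : 0 < y)
    (Q : Matrix (Fin ((p + n) + n - 1)) (Fin ((p + n) + n - 1)) ℝ)
    (hQ : Q = Qmat (rowZ p n x y))
    (E : Matrix (Fin ((p + n) + n - 1)) (Fin ((p + n) + n - 1)) ℝ)
    (hE : E = Q - Matrix.diagonal (fun i => Q i i)) :
    E.rank ≤ 2 ∧
    (∀ T : Finset (Fin ((p + n) + n - 1)), T.card = 1 → principalMinor E T = 0) ∧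
    (∀ T : Finset (Fin ((p + n) + n - 1)), 3 ≤ T.card → principalMinor E T = 0) ∧
    E.det = 0 ∧
    Sterm (fun i => Q i i) E (2 * n + p - 2) = 0 ∧
    (∀ i : ℕ, 4 ≤ i → Sterm (fun i => Q i i) E (2 * n + p - i) = 0) ∧
    Q.det = (Matrix.diagonal (fun i => Q i i)).det
        + Sterm (fun i => Q i i) E (2 * n + p - 3) := by
  classical
  obtain ⟨u, hu⟩ : ∃ u : Fin ((p + n) + n - 1) → ℝ, u = fun i : Fin ((p + n) + n - 1) =>
      if (i : ℕ) < p then x ^ 2 + x else if (i : ℕ) < p + n then y ^ 2 + y else 0 := ⟨_, rfl⟩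
  obtain ⟨v, hv⟩ : ∃ v : Fin ((p + n) + n - 1) → ℝ, v = fun i : Fin ((p + n) + n - 1) =>
      if (i : ℕ) < p + n then (0 : ℝ) else 1 := ⟨_, rfl⟩
  have hEentry : ∀ i j, E i j = u i * v j + v i * u j := by
    intro i j
    by_cases hij : i = j
    · subst hij
      have hL : E i i = 0 := by simp [hE]
      rw [hL, hu, hv]
      by_cases h1 : (i : ℕ) < p + n
      · simp [h1]
      · have h2 : ¬ (i : ℕ) < p := by omega
        simp [h1, h2]
    · have hL : E i j = Q i j := by
        simp [hE, Matrix.diagonal_apply_ne _ hij]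
      rw [hL, hQ, hu, hv]
      simp only [Qmat, Matrix.of_apply, rowZ, if_neg hij]
      split_ifs <;> first | (exfalso; omega) | ring1
  obtain ⟨C, hC⟩ : ∃ C : Matrix (Fin ((p + n) + n - 1)) (Fin 2) ℝ,
      C = Matrix.of fun i k => if k = 0 then u i else v i := ⟨_, rfl⟩
  obtain ⟨R, hR⟩ : ∃ R : Matrix (Fin 2) (Fin ((p + n) + n - 1)) ℝ,
      R = Matrix.of fun k j => if k = 0 then v j else u j := ⟨_, rfl⟩
  have hCR : E = C * R := by
    ext i j
    rw [Matrix.mul_apply, Fin.sum_univ_two, hEentry i j, hC, hR]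
    norm_num
  have hN3 : 3 ≤ (p + n) + n - 1 := by omega
  have hrank : E.rank ≤ 2 := by
    rw [hCR]
    exact le_trans (Matrix.rank_mul_le_right C R) (by simpa using Matrix.rank_le_card_height R)
  have hEdiag : ∀ i, E i i = 0 := by intro i; simp [hE]
  have minor1 : ∀ T : Finset (Fin ((p + n) + n - 1)), T.card = 1 → principalMinor E T = 0 := by
    intro T hT
    haveI : Unique (Fin T.card) := by rw [hT]; exact inferInstance
    rw [principalMinor, Matrix.det_unique]
    exact hEdiag _
  have hsubmul : ∀ {k : ℕ} (f : Fin k → Fin ((p + n) + n - 1)),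
      (C * R).submatrix f f = (C.submatrix f id) * (R.submatrix id f) := by
    intro k f
    ext i j
    simp [Matrix.mul_apply]
  have minor3 : ∀ T : Finset (Fin ((p + n) + n - 1)), 3 ≤ T.card → principalMinor E T = 0 := by
    intro T hT
    rw [principalMinor, hCR, hsubmul]
    exact aux_det_mul_fin_two hT _ _
  have hdetE : E.det = 0 := by
    rw [hCR]
    exact aux_det_mul_fin_two hN3 C R
  refine ⟨hrank, minor1, minor3, hdetE, ?_, ?_, ?_⟩
  · refine Finset.sum_eq_zero fun S hS => ?_
    rw [Finset.mem_powersetCard_univ] at hS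
    have hc : Sᶜ.card = 1 := by
      rw [Finset.card_compl, Fintype.card_fin, hS]; omega
    rw [minor1 _ hc, mul_zero]
  · intro i hi
    refine Finset.sum_eq_zero fun S hS => ?_
    rw [Finset.mem_powersetCard_univ] at hS
    have hc : 3 ≤ Sᶜ.card := by
      rw [Finset.card_compl, Fintype.card_fin, hS]; omega
    rw [minor3 _ hc, mul_zero]
  · have hQE : Q = Matrix.diagonal (fun i => Q i i) + E := by
      rw [hE]; abel
    have h23 : 2 * n + p - 3 = ((p + n) + n - 1) - 2 := by omega
    rw [h23]
    exact final_aux hN3 Q E hQE minor1 minor3
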